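/- For every real α with 1/2 < α < 1, there exists a rational number k of the form k = 1 + s/(2m+1) (with s ∈ ℕ⁺, m ∈ ℕ), k > 1, such that 1 − (k√(2k−1) − 2k + 1)/(k−1)² < α < 1 − 1/(2k). -/

import Mathlib

lemma key_ineq (a : ℝ) (ha : 1 < a) :
    1 / (2 * a) < (a * Real.sqrt (2 * a - 1) - 2 * a + 1) / (a - 1) ^ 2 := by
  set t := Real.sqrt (2 * a - 1) with htdef
  have ht2 : t ^ 2 = 2 * a - 1 := Real.sq_sqrt (by linarith)
  have ht0 : 0 ≤ t := Real.sqrt_nonneg _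
  have ht1 : 1 < t := by nlinarith
  have hpos : 0 < 8 * a ^ 2 - 5 * a + 1 := by nlinarith [sq_nonneg (4 * a - 5)]
  have h3 : 0 < (a - 1) ^ 3 * (8 * a ^ 2 - 5 * a + 1) :=
    mul_pos (pow_pos (by linarith) 3) hpos
  have ht2' : 4 * a ^ 4 * t ^ 2 = 4 * a ^ 4 * (2 * a - 1) := by rw [ht2]
  have hd : 0 < (2 * a ^ 2 * t - (5 * a ^ 2 - 4 * a + 1)) *
      (2 * a ^ 2 * t + (5 * a ^ 2 - 4 * a + 1)) := by nlinarith [h3, ht2']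
  have hsum : 0 < 2 * a ^ 2 * t + (5 * a ^ 2 - 4 * a + 1) := by nlinarith
  have hXB : 0 < 2 * a ^ 2 * t - (5 * a ^ 2 - 4 * a + 1) := by
    rcases mul_pos_iff.mp hd with ⟨h, _⟩ | ⟨_, h⟩ <;> linarith
  rw [div_lt_div_iff₀ (by linarith) (pow_pos (by linarith) 2)]
  nlinarith [hXB]

theorem lemma_3_2 (α : ℝ) (h1 : 1 / 2 < α) (h2 : α < 1) :
    ∃ (s : ℕ+) (m : ℕ) (k : ℝ),
      k = 1 + (s : ℝ) / (2 * (m : ℝ) + 1) ∧ 1 < k ∧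
      1 - (k * Real.sqrt (2 * k - 1) - 2 * k + 1) / (k - 1) ^ 2 < α ∧
      α < 1 - 1 / (2 * k) := by
  set F : ℝ → ℝ := fun k => 1 - (k * Real.sqrt (2 * k - 1) - 2 * k + 1) / (k - 1) ^ 2 with hF
  have h1α : 0 < 1 - α := by linarith
  set k₀ : ℝ := 1 / (2 * (1 - α)) with hk₀
  have hk₀1 : 1 < k₀ := by
    rw [hk₀, lt_div_iff₀ (by linarith)]; linarith
  have hαk₀ : α = 1 - 1 / (2 * k₀) := by
    rw [hk₀]; field_simp; ring
  have hFk₀ : F k₀ < α := by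
    have := key_ineq k₀ hk₀1
    rw [hαk₀]
    simp only [hF]
    linarith
  have h0 : ((k₀ : ℝ) - 1) ^ 2 ≠ 0 :=
    pow_ne_zero _ (by intro h; rw [sub_eq_zero] at h; linarith)
  have hc : ContinuousAt F k₀ := by
    apply ContinuousAt.sub continuousAt_const
    apply ContinuousAt.div
    · fun_prop
    · fun_prop
    · exact h0
  have hmem : F ⁻¹' (Set.Iio α) ∈ nhds k₀ := hc (Iio_mem_nhds hFk₀)
  rw [Metric.mem_nhds_iff] at hmem
  obtain ⟨ε, hε, hball⟩ := hmem
  obtain ⟨m, hm⟩ := exists_nat_gt (1 / ε)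
  have hm0 : 0 < (m : ℝ) := lt_trans (by positivity) hm
  have hD : (0:ℝ) < 2 * (m : ℝ) + 1 := by positivity
  have hsmall : 1 / (2 * (m : ℝ) + 1) < ε := by
    rw [div_lt_iff₀ hD]
    rw [div_lt_iff₀ hε] at hm
    nlinarith
  set x : ℝ := (k₀ - 1) * (2 * (m : ℝ) + 1) with hx
  have hx0 : 0 ≤ x := mul_nonneg (by linarith) (by linarith)
  have hk₀x : k₀ = 1 + x / (2 * (m : ℝ) + 1) := by
    rw [hx]; field_simp; ring
  set k : ℝ := 1 + ((Nat.floor x : ℝ) + 1) / (2 * (m : ℝ) + 1) with hk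
  have hlow : x < (Nat.floor x : ℝ) + 1 := Nat.lt_floor_add_one x
  have hup : (Nat.floor x : ℝ) + 1 ≤ x + 1 := by linarith [Nat.floor_le hx0]
  have hkgt : k₀ < k := by
    rw [hk, hk₀x]
    gcongr
  have hkle : k - k₀ < ε := by
    rw [hk, hk₀x]
    calc 1 + ((Nat.floor x : ℝ) + 1) / (2 * (m : ℝ) + 1) - (1 + x / (2 * (m : ℝ) + 1))
        = ((Nat.floor x : ℝ) + 1 - x) / (2 * (m : ℝ) + 1) := by ring
      _ ≤ 1 / (2 * (m : ℝ) + 1) := by gcongr; linarith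
      _ < ε := hsmall
  have hFk : F k < α := by
    apply hball
    rw [Metric.mem_ball, Real.dist_eq, abs_lt]
    constructor <;> linarith
  refine ⟨⟨Nat.floor x + 1, Nat.succ_pos _⟩, m, k, ?_, by linarith, ?_, ?_⟩
  · rw [hk]
    push_cast [PNat.mk_coe]
    ring
  · simpa [hF] using hFk
  · rw [hαk₀]
    have hk0 : (0:ℝ) < k₀ := by linarith
    have : 1 / (2 * k) < 1 / (2 * k₀) :=
      one_div_lt_one_div_of_lt (by linarith) (by linarith)
    linarith
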